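/- arXiv:1602.02437 — 2 statements merged into one kernel-verified Lean document; each statement's English description precedes it below -/
import Mathlib

section
/- Under the standing blow-up assumptions, for every sequence ε_k → 0 such that Σ_k ⊂ B_{ε_k/2}(0), there exists a sequence l_k → 0 with l_k ≥ 2ε_k such that |ū_k(l_k)| + 2 log l_k → −∞ as k → ∞, where ū_k(r) = (1/(2πr)) ∫_{∂B_r} u_k is the spherical average of u_k over ∂B_r. -/
open MeasureTheory Metric Filter Set

noncomputable section

abbrev E2 := EuclideanSpace ℝ (Fin 2)

/-- The Laplacian of a function `u : ℝ² → ℝ`. -/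
def lap (u : E2 → ℝ) (x : E2) : ℝ :=
  ∑ i : Fin 2, fderiv ℝ (fun y => fderiv ℝ u y (EuclideanSpace.single i 1)) x
    (EuclideanSpace.single i 1)

/-- The point `(r cos θ, r sin θ)` on the circle of radius `r` centered at the origin. -/
def circ (r θ : ℝ) : E2 := (WithLp.equiv 2 (Fin 2 → ℝ)).symm ![r * Real.cos θ, r * Real.sin θ]

/-- Spherical average `ū(r) = (1/(2πr)) ∫_{∂B_r} u dσ`, via arc-length parametrization. -/
def sphAvg (f : E2 → ℝ) (r : ℝ) : ℝ :=
  (2 * Real.pi)⁻¹ * ∫ θ in (0:ℝ)..(2 * Real.pi), f (circ r θ)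

/-- Local mass `σ₁ᵏ(r) = (1/(2π)) ∫_{B_r} h₁ᵏ e^{u_k}`. -/
def mass1 (u h : ℕ → E2 → ℝ) (k : ℕ) (r : ℝ) : ℝ :=
  (2 * Real.pi)⁻¹ * ∫ x in ball (0:E2) r, h k x * Real.exp (u k x)

/-- Local mass `σ₂ᵏ(r) = (1/(2π)) ∫_{B_r} h₂ᵏ e^{-u_k}`. -/
def mass2 (u h : ℕ → E2 → ℝ) (k : ℕ) (r : ℝ) : ℝ :=
  (2 * Real.pi)⁻¹ * ∫ x in ball (0:E2) r, h k x * Real.exp (-(u k x))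

/-- The standing blow-up assumptions for the sinh-Gordon equation in `B₁ ⊂ ℝ²`. -/
def BlowUpSetup (u h₁ h₂ : ℕ → E2 → ℝ) : Prop :=
  (∀ k, ContDiffOn ℝ 2 (u k) (ball 0 1)) ∧
  (∀ k, ∀ x ∈ ball (0:E2) 1,
      lap (u k) x + h₁ k x * Real.exp (u k x) - h₂ k x * Real.exp (-(u k x)) = 0) ∧
  (∀ k, IntegrableOn (fun x => h₁ k x * Real.exp (u k x)) (ball (0:E2) 1)) ∧
  (∀ k, IntegrableOn (fun x => h₂ k x * Real.exp (-(u k x))) (ball (0:E2) 1)) ∧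
  (∃ C : ℝ, 0 < C ∧
    (∀ k, ContDiffOn ℝ 3 (h₁ k) (ball 0 1) ∧ ContDiffOn ℝ 3 (h₂ k) (ball 0 1)) ∧
    (∀ k, ∀ x ∈ ball (0:E2) 1,
        C⁻¹ ≤ h₁ k x ∧ h₁ k x ≤ C ∧ C⁻¹ ≤ h₂ k x ∧ h₂ k x ≤ C) ∧
    (∀ k, ∀ x ∈ ball (0:E2) 1, ∀ j : ℕ, j ≤ 3 →
        ‖iteratedFDerivWithin ℝ j (h₁ k) (ball 0 1) x‖ ≤ C ∧
        ‖iteratedFDerivWithin ℝ j (h₂ k) (ball 0 1) x‖ ≤ C) ∧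
    (∀ k, ∀ x ∈ sphere (0:E2) 1, ∀ y ∈ sphere (0:E2) 1, |u k x - u k y| ≤ C) ∧
    (∀ k, (∫ x in ball (0:E2) 1, h₁ k x * Real.exp (u k x)) ≤ C) ∧
    (∀ k, (∫ x in ball (0:E2) 1, h₂ k x * Real.exp (-(u k x))) ≤ C)) ∧
  (∀ K : Set E2, IsCompact K → K ⊆ ball 0 1 \ {0} → ∃ CK : ℝ, ∀ k, ∀ x ∈ K, |u k x| ≤ CK) ∧
  (∀ M : ℝ, ∀ᶠ k in atTop, ∃ x ∈ ball (0:E2) 1, M < |u k x|)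

/-- `σ` is the iterated limit `lim_{δ→0⁺} lim_{k→∞} F k δ`. -/
def IsBlowUpMass (F : ℕ → ℝ → ℝ) (σ : ℝ) : Prop :=
  ∃ S : ℝ → ℝ, (∀ δ : ℝ, 0 < δ → δ < 1 → Tendsto (fun k => F k δ) atTop (nhds (S δ))) ∧
    Tendsto S (nhdsWithin 0 (Ioi 0)) (nhds σ)

/-- The properties of the bubbling set `Σ_k` produced by the selection process. -/
def SelectionSet (u : ℕ → E2 → ℝ) (Sk : ℕ → Finset E2) : Prop :=
  (∀ k, (Sk k).Nonempty) ∧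
  (∀ ε : ℝ, 0 < ε → ∀ᶠ k in atTop, ∀ x ∈ Sk k, ‖x‖ < ε) ∧
  (∃ C₁ : ℝ, 0 < C₁ ∧ ∀ k, ∀ x ∈ ball (0:E2) 1,
      |u k x| + 2 * Real.log (infDist x (↑(Sk k) : Set E2)) ≤ C₁)

/-- Convergence in `C²_loc(ℝ²)`. -/
def ConvC2loc (w : ℕ → E2 → ℝ) (v : E2 → ℝ) : Prop :=
  ∀ K : Set E2, IsCompact K → ∀ j : ℕ, j ≤ 2 →
    TendstoUniformlyOn (fun k y => iteratedFDeriv ℝ j (w k) y) (iteratedFDeriv ℝ j v) atTop K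

/-- Uniform convergence to `-∞` on every compact subset of `ℝ²`. -/
def TendsNegInfLoc (w : ℕ → E2 → ℝ) : Prop :=
  ∀ K : Set E2, IsCompact K → ∀ M : ℝ, ∀ᶠ k in atTop, ∀ y ∈ K, w k y ≤ -M

lemma norm_circ (r θ : ℝ) (hr : 0 ≤ r) : ‖circ r θ‖ = r := by
  rw [EuclideanSpace.norm_eq]
  have h0 : (circ r θ) 0 = r * Real.cos θ := rfl
  have h1 : (circ r θ) 1 = r * Real.sin θ := rfl
  rw [Fin.sum_univ_two, h0, h1]
  have : ‖r * Real.cos θ‖ ^ 2 + ‖r * Real.sin θ‖ ^ 2 = r ^ 2 := by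
    rw [Real.norm_eq_abs, Real.norm_eq_abs, sq_abs, sq_abs, mul_pow, mul_pow,
      ← mul_add, Real.cos_sq_add_sin_sq, mul_one]
  rw [this, Real.sqrt_sq hr]

lemma continuous_circ : Continuous fun p : ℝ × ℝ => circ p.1 p.2 := by
  have h : Continuous fun p : ℝ × ℝ => (![p.1 * Real.cos p.2, p.1 * Real.sin p.2] : Fin 2 → ℝ) := by
    refine continuous_pi fun i => ?_
    fin_cases i
    · exact continuous_fst.mul (Real.continuous_cos.comp continuous_snd)
    · exact continuous_fst.mul (Real.continuous_sin.comp continuous_snd)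
  exact (PiLp.continuousLinearEquiv 2 ℝ (fun _ : Fin 2 => ℝ)).symm.continuous.comp h

lemma circ_periodic (r : ℝ) : Function.Periodic (fun θ => circ r θ) (2 * Real.pi) := by
  intro θ
  simp only [circ, Real.cos_add_two_pi, Real.sin_add_two_pi]

lemma circ_mem_ball {r : ℝ} (hr : 0 ≤ r) (hr1 : r < 1) (θ : ℝ) : circ r θ ∈ ball (0:E2) 1 := by
  rw [mem_ball, dist_zero_right, norm_circ r θ hr]; exact hr1

lemma continuous_comp_circ {v : E2 → ℝ} (hv : ContinuousOn v (ball (0:E2) 1))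
    {r : ℝ} (hr : 0 ≤ r) (hr1 : r < 1) : Continuous fun θ => v (circ r θ) := by
  refine ContinuousOn.comp_continuous hv
    (continuous_circ.comp (continuous_const.prodMk continuous_id)) ?_
  exact fun θ => circ_mem_ball hr hr1 θ

lemma jensen_circle {v : E2 → ℝ} (hv : ContinuousOn v (ball (0:E2) 1))
    {r : ℝ} (h0 : 0 ≤ r) (h1 : r < 1) :
    2 * Real.pi * Real.exp (sphAvg v r) ≤
      ∫ θ in (0:ℝ)..(2 * Real.pi), Real.exp (v (circ r θ)) := by
  set m := sphAvg v r with hm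
  have hc : Continuous fun θ => v (circ r θ) := continuous_comp_circ hv h0 h1
  have hc' : Continuous fun θ => Real.exp (v (circ r θ)) := Real.continuous_exp.comp hc
  have h2pi : (0:ℝ) < 2 * Real.pi := by positivity
  have hI : (∫ θ in (0:ℝ)..(2 * Real.pi), v (circ r θ)) = 2 * Real.pi * m := by
    rw [hm, sphAvg]; field_simp
  have hpt : ∀ θ ∈ Set.Icc (0:ℝ) (2 * Real.pi),
      Real.exp m * v (circ r θ) + Real.exp m * (1 - m) ≤ Real.exp (v (circ r θ)) := by
    intro θ _
    have h := Real.add_one_le_exp (v (circ r θ) - m)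
    have h2 : Real.exp m * (v (circ r θ) - m + 1) ≤ Real.exp m * Real.exp (v (circ r θ) - m) :=
      mul_le_mul_of_nonneg_left h (Real.exp_nonneg m)
    rw [← Real.exp_add, add_sub_cancel] at h2
    nlinarith [h2]
  have hmono : (∫ θ in (0:ℝ)..(2 * Real.pi),
      (Real.exp m * v (circ r θ) + Real.exp m * (1 - m))) ≤
      ∫ θ in (0:ℝ)..(2 * Real.pi), Real.exp (v (circ r θ)) := by
    refine intervalIntegral.integral_mono_on h2pi.le ?_ (hc'.intervalIntegrable _ _) hpt
    exact ((continuous_const.mul hc).add continuous_const).intervalIntegrable _ _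
  have hleft : (∫ θ in (0:ℝ)..(2 * Real.pi),
      (Real.exp m * v (circ r θ) + Real.exp m * (1 - m))) = 2 * Real.pi * Real.exp m := by
    rw [intervalIntegral.integral_add (f := fun θ => Real.exp m * v (circ r θ))
      ((continuous_const.mul hc).intervalIntegrable _ _)
      (intervalIntegrable_const), intervalIntegral.integral_const_mul, hI,
      intervalIntegral.integral_const]
    simp only [smul_eq_mul, sub_zero]
    ring
  linarith

def ee : ℝ × ℝ ≃ᵐ E2 :=
  MeasurableEquiv.finTwoArrow.symm.trans (MeasurableEquiv.toLp 2 (Fin 2 → ℝ))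

lemma ee_measurePreserving : MeasurePreserving ee volume volume :=
  ((EuclideanSpace.volume_preserving_symm_measurableEquiv_toLp (Fin 2)).symm).comp
    ((volume_preserving_finTwoArrow ℝ).symm _)

lemma ee_apply (x y : ℝ) : ee (x, y) = (WithLp.equiv 2 (Fin 2 → ℝ)).symm ![x, y] := by
  have : (MeasurableEquiv.finTwoArrow.symm (x, y) : Fin 2 → ℝ) = ![x, y] := by
    funext i
    fin_cases i <;> rfl
  show (MeasurableEquiv.toLp 2 (Fin 2 → ℝ)) (MeasurableEquiv.finTwoArrow.symm (x, y)) = _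
  rw [this]
  rfl

lemma ee_polar (p : ℝ × ℝ) : ee (polarCoord.symm p) = circ p.1 p.2 := by
  rw [polarCoord_symm_apply, ee_apply]; rfl

lemma polar_annulus {g : E2 → ℝ} (hg : ContinuousOn g (ball (0:E2) 1))
    {a b : ℝ} (ha : 0 < a) (hab : a < b) (hb : b ≤ 1/2) :
    (∫ x in (fun x : E2 => ‖x‖) ⁻¹' (Ioo a b), g x)
      = ∫ r in Ioo a b, r * ∫ θ in Ioo (-Real.pi) Real.pi, g (circ r θ) := by
  have hb1 : b < 1 := lt_of_le_of_lt hb (by norm_num)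
  set A : Set E2 := (fun x : E2 => ‖x‖) ⁻¹' (Ioo a b) with hAdef
  have hA : MeasurableSet A := measurableSet_Ioo.preimage continuous_norm.measurable
  have hAcb : A ⊆ closedBall (0:E2) (1/2) := by
    intro x hx
    rw [mem_closedBall, dist_zero_right]
    exact le_trans hx.2.le hb
  have hcb1 : closedBall (0:E2) (1/2) ⊆ ball (0:E2) 1 :=
    closedBall_subset_ball (by norm_num)
  have hgA : IntegrableOn g A := by
    refine IntegrableOn.mono_set ?_ hAcb
    exact (hg.mono hcb1).integrableOn_compact (isCompact_closedBall _ _)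
  set G : E2 → ℝ := A.indicator g with hGdef
  have hGint : Integrable G := (integrable_indicator_iff hA).2 hgA
  have step1 : (∫ x in A, g x) = ∫ x, G x := (integral_indicator hA).symm
  have step2 : (∫ x, G x) = ∫ p, G (ee p) :=
    (ee_measurePreserving.integral_comp ee.measurableEmbedding G).symm
  have step3 : (∫ p, G (ee p)) =
      ∫ p in polarCoord.target, p.1 • G (ee (polarCoord.symm p)) :=
    (integral_comp_polarCoord_symm (fun p => G (ee p))).symm
  set s : Set (ℝ × ℝ) := Ioo a b ×ˢ Ioo (-Real.pi) Real.pi with hsdef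
  have hssub : s ⊆ polarCoord.target := by
    rw [polarCoord_target]
    exact Set.prod_mono (fun x hx => lt_trans ha hx.1) subset_rfl
  have step4 : (∫ p in polarCoord.target, p.1 • G (ee (polarCoord.symm p)))
      = ∫ p in s, p.1 • G (ee (polarCoord.symm p)) := by
    refine setIntegral_eq_of_subset_of_forall_diff_eq_zero
      polarCoord.open_target.measurableSet hssub ?_
    rintro ⟨r, θ⟩ ⟨hmem, hnots⟩
    rw [polarCoord_target] at hmem
    have hr0 : 0 < r := hmem.1
    have hrnot : r ∉ Ioo a b := by
      intro hr
      exact hnots ⟨hr, hmem.2⟩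
    have : ee (polarCoord.symm (r, θ)) ∉ A := by
      rw [ee_polar]
      simpa [hAdef, norm_circ r θ hr0.le] using hrnot
    rw [ee_polar] at this
    show r • G (ee (polarCoord.symm (r, θ))) = 0
    rw [ee_polar, hGdef, Set.indicator_of_notMem this, smul_zero]
  have step5 : (∫ p in s, p.1 • G (ee (polarCoord.symm p)))
      = ∫ p in s, p.1 * g (circ p.1 p.2) := by
    refine setIntegral_congr_fun (measurableSet_Ioo.prod measurableSet_Ioo) ?_
    rintro ⟨r, θ⟩ hmem
    have : ee (polarCoord.symm (r, θ)) ∈ A := by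
      rw [ee_polar]
      simpa [hAdef, norm_circ r θ (lt_trans ha hmem.1.1).le] using hmem.1
    rw [ee_polar] at this
    show r • G (ee (polarCoord.symm (r, θ))) = r * g (circ r θ)
    rw [ee_polar, hGdef, Set.indicator_of_mem this, smul_eq_mul]
  have hf0int : IntegrableOn (fun p : ℝ × ℝ => p.1 * g (circ p.1 p.2)) s := by
    refine IntegrableOn.mono_set ?_
      (Set.prod_mono Set.Ioo_subset_Icc_self Set.Ioo_subset_Icc_self)
    refine ContinuousOn.integrableOn_compact (isCompact_Icc.prod isCompact_Icc) ?_
    refine (continuous_fst.continuousOn).mul ?_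
    refine hg.comp (continuous_circ.continuousOn) ?_
    rintro ⟨r, θ⟩ hmem
    refine circ_mem_ball (le_trans ha.le hmem.1.1) ?_ θ
    exact lt_of_le_of_lt hmem.1.2 hb1
  have step6 : (∫ p in s, p.1 * g (circ p.1 p.2))
      = ∫ r in Ioo a b, ∫ θ in Ioo (-Real.pi) Real.pi, r * g (circ r θ) := by
    rw [hsdef]
    rw [Measure.volume_eq_prod] at hf0int ⊢
    exact setIntegral_prod _ hf0int
  have step7 : ∀ r : ℝ, (∫ θ in Ioo (-Real.pi) Real.pi, r * g (circ r θ))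
      = r * ∫ θ in Ioo (-Real.pi) Real.pi, g (circ r θ) := fun r =>
    integral_const_mul r _
  rw [step1, step2, step3, step4, step5, step6]
  exact setIntegral_congr_fun measurableSet_Ioo fun r _ => step7 r

lemma key_lemma {C : ℝ} (hC : 0 < C) {u h₁ h₂ : E2 → ℝ}
    (hu : ContinuousOn u (ball (0:E2) 1))
    (hh₁ : ContinuousOn h₁ (ball (0:E2) 1)) (hh₂ : ContinuousOn h₂ (ball (0:E2) 1))
    (hlb : ∀ x ∈ ball (0:E2) 1, C⁻¹ ≤ h₁ x ∧ C⁻¹ ≤ h₂ x)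
    (hint1 : IntegrableOn (fun x => h₁ x * Real.exp (u x)) (ball (0:E2) 1))
    (hint2 : IntegrableOn (fun x => h₂ x * Real.exp (-(u x))) (ball (0:E2) 1))
    (hE1 : (∫ x in ball (0:E2) 1, h₁ x * Real.exp (u x)) ≤ C)
    (hE2 : (∫ x in ball (0:E2) 1, h₂ x * Real.exp (-(u x))) ≤ C)
    {a b B : ℝ} (ha : 0 < a) (hab : a < b) (hb : b ≤ 1/2)
    (hB : 2 * C < 2 * Real.pi * C⁻¹ * Real.exp B * Real.log (b / a)) :
    ∃ r ∈ Ioo a b, |sphAvg u r| + 2 * Real.log r ≤ B := by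
  by_contra hcon
  push_neg at hcon
  have hb1 : b < 1 := lt_of_le_of_lt hb (by norm_num)
  set g : E2 → ℝ := fun x => h₁ x * Real.exp (u x) + h₂ x * Real.exp (-(u x)) with hgdef
  have hgc : ContinuousOn g (ball (0:E2) 1) := by
    refine ContinuousOn.add (hh₁.mul ?_) (hh₂.mul ?_)
    · exact Real.continuous_exp.comp_continuousOn hu
    · exact Real.continuous_exp.comp_continuousOn hu.neg
  -- pointwise-in-r lower bound
  have hcirc : ∀ r ∈ Ioo a b,
      2 * Real.pi * C⁻¹ * Real.exp B * r⁻¹ ≤ r * ∫ θ in Ioo (-Real.pi) Real.pi, g (circ r θ) := by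
    intro r hr
    have hr0 : 0 < r := lt_trans ha hr.1
    have hr1 : r < 1 := lt_trans hr.2 hb1
    set m := sphAvg u r with hm
    have hcu : Continuous fun θ => u (circ r θ) := continuous_comp_circ hu hr0.le hr1
    have hgcont : Continuous fun θ => g (circ r θ) := continuous_comp_circ hgc hr0.le hr1
    -- shift to [0, 2π]
    have hper : (fun θ => g (circ r θ)).Periodic (2 * Real.pi) :=
      fun θ => congrArg g (circ_periodic r θ)
    have hshift : (∫ θ in Ioo (-Real.pi) Real.pi, g (circ r θ))
        = ∫ θ in (0:ℝ)..(2 * Real.pi), g (circ r θ) := by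
      rw [← integral_Ioc_eq_integral_Ioo,
        ← intervalIntegral.integral_of_le (by linarith [Real.pi_pos] : -Real.pi ≤ Real.pi)]
      have := hper.intervalIntegral_add_eq (-Real.pi) 0
      rw [show -Real.pi + 2 * Real.pi = Real.pi by ring, zero_add] at this
      exact this
    -- Jensen bounds
    have hj1 := jensen_circle hu hr0.le hr1
    have hj2 := jensen_circle (v := fun x => -(u x)) hu.neg hr0.le hr1
    have hsneg : sphAvg (fun x => -(u x)) r = -m := by
      rw [sphAvg, hm, sphAvg]
      rw [intervalIntegral.integral_neg]
      ring
    rw [hsneg] at hj2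
    -- pointwise bound on circle
    have hpt : ∀ θ ∈ Icc (0:ℝ) (2 * Real.pi),
        C⁻¹ * (Real.exp (u (circ r θ)) + Real.exp (-(u (circ r θ)))) ≤ g (circ r θ) := by
      intro θ _
      have hball := circ_mem_ball hr0.le hr1 θ
      have h1 := (hlb _ hball).1
      have h2 := (hlb _ hball).2
      have e1 : (0:ℝ) < Real.exp (u (circ r θ)) := Real.exp_pos _
      have e2 : (0:ℝ) < Real.exp (-(u (circ r θ))) := Real.exp_pos _
      rw [hgdef]
      simp only [mul_add]
      exact add_le_add (mul_le_mul_of_nonneg_right h1 e1.le)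
        (mul_le_mul_of_nonneg_right h2 e2.le)
    have hmono : (∫ θ in (0:ℝ)..(2 * Real.pi),
        C⁻¹ * (Real.exp (u (circ r θ)) + Real.exp (-(u (circ r θ)))))
          ≤ ∫ θ in (0:ℝ)..(2 * Real.pi), g (circ r θ) := by
      refine intervalIntegral.integral_mono_on (by positivity) ?_
        (hgcont.intervalIntegrable _ _) hpt
      exact (continuous_const.mul ((Real.continuous_exp.comp hcu).add
        (Real.continuous_exp.comp hcu.neg))).intervalIntegrable _ _
    have hsplit : (∫ θ in (0:ℝ)..(2 * Real.pi),
        C⁻¹ * (Real.exp (u (circ r θ)) + Real.exp (-(u (circ r θ)))))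
        = C⁻¹ * ((∫ θ in (0:ℝ)..(2 * Real.pi), Real.exp (u (circ r θ)))
          + ∫ θ in (0:ℝ)..(2 * Real.pi), Real.exp (-(u (circ r θ)))) := by
      have i1 : IntervalIntegrable (fun θ => Real.exp (u (circ r θ))) volume 0 (2 * Real.pi) :=
        (Real.continuous_exp.comp hcu).intervalIntegrable _ _
      have i2 : IntervalIntegrable (fun θ => Real.exp (-(u (circ r θ)))) volume 0 (2 * Real.pi) :=
        (Real.continuous_exp.comp hcu.neg).intervalIntegrable _ _
      rw [intervalIntegral.integral_const_mul, intervalIntegral.integral_add i1 i2]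
    -- |m| bound
    have habs : Real.exp B * r⁻¹ * r⁻¹ ≤ Real.exp |m| := by
      have hBm : B - 2 * Real.log r ≤ |m| := by linarith [(hcon r hr).le]
      have := Real.exp_le_exp.2 hBm
      refine le_trans (le_of_eq ?_) this
      rw [Real.exp_sub]
      have : Real.exp (2 * Real.log r) = r * r := by
        rw [two_mul, Real.exp_add, Real.exp_log hr0]
      rw [this]
      field_simp
    have hexpabs : Real.exp |m| ≤ Real.exp m + Real.exp (-m) := by
      rcases abs_cases m with ⟨h, _⟩ | ⟨h, _⟩
      · rw [h]; linarith [Real.exp_pos (-m)]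
      · rw [h]; linarith [Real.exp_pos m]
    -- combine
    have hpi : (0:ℝ) < 2 * Real.pi := by positivity
    have hCinv : (0:ℝ) < C⁻¹ := inv_pos.2 hC
    have chain : 2 * Real.pi * C⁻¹ * (Real.exp B * r⁻¹ * r⁻¹)
        ≤ ∫ θ in Ioo (-Real.pi) Real.pi, g (circ r θ) := by
      rw [hshift]
      refine le_trans ?_ (le_trans (le_of_eq hsplit.symm) hmono)
      have h2 : 2 * Real.pi * (Real.exp B * r⁻¹ * r⁻¹) ≤ 2 * Real.pi * Real.exp |m| :=
        mul_le_mul_of_nonneg_left habs hpi.le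
      have h3 : 2 * Real.pi * Real.exp |m| ≤
          (∫ θ in (0:ℝ)..(2 * Real.pi), Real.exp (u (circ r θ)))
            + ∫ θ in (0:ℝ)..(2 * Real.pi), Real.exp (-(u (circ r θ))) := by
        have := mul_le_mul_of_nonneg_left hexpabs hpi.le
        rw [mul_add] at this
        exact le_trans this (add_le_add hj1 hj2)
      calc 2 * Real.pi * C⁻¹ * (Real.exp B * r⁻¹ * r⁻¹)
          = C⁻¹ * (2 * Real.pi * (Real.exp B * r⁻¹ * r⁻¹)) := by ring
        _ ≤ C⁻¹ * (2 * Real.pi * Real.exp |m|) := by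
            exact mul_le_mul_of_nonneg_left h2 hCinv.le
        _ ≤ C⁻¹ * ((∫ θ in (0:ℝ)..(2 * Real.pi), Real.exp (u (circ r θ)))
            + ∫ θ in (0:ℝ)..(2 * Real.pi), Real.exp (-(u (circ r θ)))) :=
            mul_le_mul_of_nonneg_left h3 hCinv.le
    calc 2 * Real.pi * C⁻¹ * Real.exp B * r⁻¹
        = r * (2 * Real.pi * C⁻¹ * (Real.exp B * r⁻¹ * r⁻¹)) := by field_simp
      _ ≤ r * ∫ θ in Ioo (-Real.pi) Real.pi, g (circ r θ) :=
          mul_le_mul_of_nonneg_left chain hr0.le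
  -- integrate the bound over (a, b)
  have hpolar := polar_annulus hgc ha hab hb
  -- integrability of both sides in r
  have hlhsint : IntegrableOn (fun r : ℝ => 2 * Real.pi * C⁻¹ * Real.exp B * r⁻¹) (Ioo a b) := by
    refine IntegrableOn.mono_set ?_ Ioo_subset_Icc_self
    refine ContinuousOn.integrableOn_compact isCompact_Icc ?_
    exact (continuousOn_const.mul (continuousOn_inv₀.mono fun r hr =>
      ne_of_gt (lt_of_lt_of_le ha hr.1)))
  have hrhsint : IntegrableOn
      (fun r : ℝ => r * ∫ θ in Ioo (-Real.pi) Real.pi, g (circ r θ)) (Ioo a b) := by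
    have hb1 : b < 1 := lt_of_le_of_lt hb (by norm_num)
    have hprod : IntegrableOn (fun p : ℝ × ℝ => p.1 * g (circ p.1 p.2))
        (Ioo a b ×ˢ Ioo (-Real.pi) Real.pi) := by
      refine IntegrableOn.mono_set ?_
        (Set.prod_mono Set.Ioo_subset_Icc_self Set.Ioo_subset_Icc_self)
      refine ContinuousOn.integrableOn_compact (isCompact_Icc.prod isCompact_Icc) ?_
      refine (continuous_fst.continuousOn).mul ?_
      refine hgc.comp (continuous_circ.continuousOn) ?_
      rintro ⟨r, θ⟩ hmem
      exact circ_mem_ball (le_trans ha.le hmem.1.1) (lt_of_le_of_lt hmem.1.2 hb1) θ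
    rw [IntegrableOn, Measure.volume_eq_prod, ← Measure.prod_restrict] at hprod
    have := hprod.integral_prod_left
    refine this.congr (ae_of_all _ fun r => ?_)
    exact integral_const_mul r _
  have hmono2 : (∫ r in Ioo a b, 2 * Real.pi * C⁻¹ * Real.exp B * r⁻¹)
      ≤ ∫ r in Ioo a b, r * ∫ θ in Ioo (-Real.pi) Real.pi, g (circ r θ) :=
    setIntegral_mono_on hlhsint hrhsint measurableSet_Ioo hcirc
  -- compute LHS
  have hlhs : (∫ r in Ioo a b, 2 * Real.pi * C⁻¹ * Real.exp B * r⁻¹)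
      = 2 * Real.pi * C⁻¹ * Real.exp B * Real.log (b / a) := by
    rw [← integral_Ioc_eq_integral_Ioo,
      ← intervalIntegral.integral_of_le hab.le, intervalIntegral.integral_const_mul,
      integral_inv (by
        rw [Set.uIcc_of_le hab.le]
        rintro ⟨h1, _⟩
        exact absurd h1 (not_le.2 ha))]
  -- upper bound via energies
  have hAsub : (fun x : E2 => ‖x‖) ⁻¹' (Ioo a b) ⊆ ball (0:E2) 1 := by
    intro x hx
    rw [mem_ball, dist_zero_right]
    exact lt_trans hx.2 hb1
  have hgball : IntegrableOn g (ball (0:E2) 1) := hint1.add hint2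
  have hgnn : 0 ≤ᵐ[volume.restrict (ball (0:E2) 1)] g := by
    refine (ae_restrict_iff' measurableSet_ball).2 (ae_of_all _ fun x hx => ?_)
    have h1 := (hlb x hx).1
    have h2 := (hlb x hx).2
    have hCinv : (0:ℝ) < C⁻¹ := inv_pos.2 hC
    have := Real.exp_pos (u x)
    have := Real.exp_pos (-(u x))
    have e1 := Real.exp_pos (u x)
    have e2 := Real.exp_pos (-(u x))
    rw [hgdef]
    exact add_nonneg (mul_nonneg (le_trans hCinv.le h1) e1.le)
      (mul_nonneg (le_trans hCinv.le h2) e2.le)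
  have hup : (∫ x in (fun x : E2 => ‖x‖) ⁻¹' (Ioo a b), g x) ≤ ∫ x in ball (0:E2) 1, g x :=
    setIntegral_mono_set hgball hgnn (HasSubset.Subset.eventuallyLE hAsub)
  have hsum : (∫ x in ball (0:E2) 1, g x) ≤ 2 * C := by
    rw [hgdef]
    rw [integral_add hint1 hint2]
    linarith
  rw [hlhs] at hmono2
  rw [← hpolar] at hmono2
  linarith [le_trans hmono2 (le_trans hup hsum)]

/-- Lemma 3.2: for every `ε_k → 0` with `Σ_k ⊂ B_{ε_k/2}(0)` there exists
`l_k → 0`, `l_k ≥ 2ε_k`, such that `|ū_k(l_k)| + 2 log l_k → −∞`. -/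
theorem exists_fast_decay_average_radius (u h₁ h₂ : ℕ → E2 → ℝ) (Sk : ℕ → Finset E2)
    (hsetup : BlowUpSetup u h₁ h₂) (hSel : SelectionSet u Sk)
    (ε : ℕ → ℝ) (hεpos : ∀ k, 0 < ε k) (hε0 : Tendsto ε atTop (nhds 0))
    (hSkSub : ∀ k, (↑(Sk k) : Set E2) ⊆ ball (0:E2) (ε k / 2)) :
    ∃ l : ℕ → ℝ, Tendsto l atTop (nhds 0) ∧ (∀ k, 2 * ε k ≤ l k) ∧
      Tendsto (fun k => |sphAvg (u k) (l k)| + 2 * Real.log (l k)) atTop atBot := by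

  classical
  obtain ⟨hC2, -, hint1, hint2, ⟨C, hC, hreg, hbounds, -, -, hE1, hE2⟩, -, -⟩ := hsetup
  set c₀ : ℝ := (2 * C + 1) * C / (2 * Real.pi) with hc₀def
  have hπ : (0:ℝ) < Real.pi := Real.pi_pos
  have hc₀ : 0 < c₀ := by rw [hc₀def]; positivity
  set a : ℕ → ℝ := fun k => 2 * ε k with hadef
  set bb : ℕ → ℝ := fun k => Real.sqrt (a k) with hbdef
  set L : ℕ → ℝ := fun k => Real.log (bb k / a k) with hLdef
  set B : ℕ → ℝ := fun k => Real.log (c₀ / L k) with hBdef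
  have hapos : ∀ k, 0 < a k := fun k => by
    have := hεpos k; rw [hadef]; positivity
  have haux : ∀ k, a k ≤ 1/5 →
      0 < a k ∧ a k < bb k ∧ bb k ≤ 1/2 ∧ 0 < L k := by
    intro k hk
    have ha := hapos k
    have ha1 : a k < 1 := lt_of_le_of_lt hk (by norm_num)
    have hab : a k < bb k := by
      rw [hbdef]
      exact (Real.lt_sqrt ha.le).2 (by nlinarith)
    have hbhalf : bb k ≤ 1/2 := by
      rw [hbdef]
      calc Real.sqrt (a k) ≤ Real.sqrt (1/4) :=
            Real.sqrt_le_sqrt (le_trans hk (by norm_num))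
        _ = 1/2 := by
            rw [show (1/4 : ℝ) = (1/2)^2 by norm_num, Real.sqrt_sq (by norm_num)]
    have hL : 0 < L k := by
      rw [hLdef]
      exact Real.log_pos ((one_lt_div ha).2 hab)
    exact ⟨ha, hab, hbhalf, hL⟩
  have hex : ∀ k, a k ≤ 1/5 →
      ∃ r ∈ Ioo (a k) (bb k), |sphAvg (u k) r| + 2 * Real.log r ≤ B k := by
    intro k hk
    obtain ⟨ha, hab, hbhalf, hL⟩ := haux k hk
    refine key_lemma hC (hC2 k).continuousOn ((hreg k).1.continuousOn)
      ((hreg k).2.continuousOn)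
      (fun x hx => ⟨(hbounds k x hx).1, (hbounds k x hx).2.2.1⟩)
      (hint1 k) (hint2 k) (hE1 k) (hE2 k) ha hab hbhalf ?_
    have hexp : Real.exp (B k) = c₀ / L k := by
      rw [hBdef, Real.exp_log (by positivity)]
    rw [hexp, hc₀def]
    have : 2 * Real.pi * C⁻¹ * ((2 * C + 1) * C / (2 * Real.pi) / L k) * L k
        = 2 * C + 1 := by
      field_simp
    rw [hLdef] at this ⊢
    rw [this]
    linarith
  set l : ℕ → ℝ := fun k => if h : a k ≤ 1/5 then (hex k h).choose else a k with hldef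
  have hl_spec : ∀ k, a k ≤ 1/5 →
      l k ∈ Ioo (a k) (bb k) ∧ |sphAvg (u k) (l k)| + 2 * Real.log (l k) ≤ B k := by
    intro k hk
    rw [hldef]
    simp only [dif_pos hk]
    exact ⟨(hex k hk).choose_spec.1, (hex k hk).choose_spec.2⟩
  have hl_ge : ∀ k, 2 * ε k ≤ l k := by
    intro k
    by_cases hk : a k ≤ 1/5
    · exact ((hl_spec k hk).1.1).le
    · rw [hldef]
      simp only [dif_neg hk]
      rw [hadef]
  have htwoε : Tendsto (fun k => a k) atTop (nhds 0) := by
    rw [hadef]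
    simpa using hε0.const_mul 2
  have hsqrt : Tendsto (fun k => bb k) atTop (nhds 0) := by
    rw [hbdef]
    have := (Real.continuous_sqrt.tendsto 0).comp htwoε
    simpa [Function.comp_def] using this
  have hl_pos : ∀ k, 0 < l k := by
    intro k
    by_cases hk : a k ≤ 1/5
    · exact lt_trans (hapos k) (hl_spec k hk).1.1
    · rw [hldef]; simp only [dif_neg hk]; exact hapos k
  have hl_le : ∀ k, l k ≤ max (a k) (bb k) := by
    intro k
    by_cases hk : a k ≤ 1/5
    · exact le_max_of_le_right ((hl_spec k hk).1.2).le
    · rw [hldef]; simp only [dif_neg hk]; exact le_max_left _ _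
  have hl0 : Tendsto l atTop (nhds 0) := by
    refine squeeze_zero (fun k => (hl_pos k).le) hl_le ?_
    have := htwoε.max hsqrt
    simpa using this
  have heva : ∀ᶠ k in atTop, a k ≤ 1/5 := by
    have : ∀ᶠ k in atTop, a k < 1/5 :=
      htwoε.eventually (Filter.Tendsto.eventually_lt_const (by norm_num : (0:ℝ) < 1/5)
        tendsto_id) |>.mono (fun k hk => hk)
    exact this.mono fun k hk => hk.le
  have hLtend : Tendsto L atTop atTop := by
    have h1 : ∀ k, bb k / a k = 1 / Real.sqrt (a k) := by
      intro k
      rw [hbdef, Real.sqrt_div_self']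
    have h2 : Tendsto (fun k => Real.sqrt (a k)) atTop (nhdsWithin 0 (Ioi 0)) := by
      refine tendsto_nhdsWithin_iff.2 ⟨by simpa [hbdef] using hsqrt, ?_⟩
      exact Eventually.of_forall fun k => Real.sqrt_pos.2 (hapos k)
    have h3 : Tendsto (fun k => 1 / Real.sqrt (a k)) atTop atTop := by
      simpa [one_div, Pi.inv_def] using h2.inv_tendsto_nhdsGT_zero
    have h4 : Tendsto (fun k => Real.log (1 / Real.sqrt (a k))) atTop atTop :=
      Real.tendsto_log_atTop.comp h3
    rw [hLdef]
    refine h4.congr fun k => ?_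
    rw [h1 k]
  have hBtend : Tendsto B atTop atBot := by
    have h1 : Tendsto (fun k => c₀ / L k) atTop (nhds 0) :=
      Tendsto.div_atTop tendsto_const_nhds hLtend
    have h2 : ∀ᶠ k in atTop, 0 < c₀ / L k := by
      refine heva.mono fun k hk => ?_
      have := (haux k hk).2.2.2
      positivity
    have h3 : Tendsto (fun k => c₀ / L k) atTop (nhdsWithin 0 (Ioi 0)) :=
      tendsto_nhdsWithin_iff.2 ⟨h1, h2⟩
    rw [hBdef]
    exact Real.tendsto_log_nhdsGT_zero.comp h3
  refine ⟨l, hl0, hl_ge, ?_⟩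
  refine tendsto_atBot_mono' atTop ?_ hBtend
  exact heva.mono fun k hk => (hl_spec k hk).2

end
end

section
/- Let R > 0, let h₁, h₂ ∈ C¹(B_R) and let u ∈ C²(B_R) solve Δu + h₁ e^{u} − h₂ e^{−u} = 0 in B_R ⊂ ℝ². Then for every 0 < r < R the Pohozaev-type identity holds: ∫_{B_r} (x·∇h₁) e^{u} dx + ∫_{B_r} (x·∇h₂) e^{−u} dx + 2 ∫_{B_r} (h₁ e^{u} + h₂ e^{−u}) dx = r ∫_{∂B_r} (h₁ e^{u} + h₂ e^{−u}) dσ + r ∫_{∂B_r} (|∂_ν u|² − ½ |∇u|²) dσ, where ν is the outward unit normal on ∂B_r and dσ the arc-length measure. -/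
open MeasureTheory Metric Filter Set

noncomputable section

/-! ### Auxiliary lemmas for the Pohozaev identity -/

namespace PohoAux

open Real

abbrev ee (i : Fin 2) : E2 := EuclideanSpace.single i 1

lemma circ_eq (a b : ℝ) : circ a b = (a * Real.cos b) • ee 0 + (a * Real.sin b) • ee 1 := by
  ext i
  fin_cases i <;>
    simp [circ, ee, EuclideanSpace.single_apply, WithLp.equiv_symm_apply]

lemma circ_smul (a b : ℝ) : circ a b = a • circ 1 b := by
  simp [circ_eq, smul_smul, smul_add]

lemma norm_circ_one (b : ℝ) : ‖circ 1 b‖ = 1 := by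
  have : ‖circ 1 b‖ ^ 2 = 1 := by
    rw [EuclideanSpace.norm_eq, Real.sq_sqrt (by positivity)]
    simp [circ_eq, Fin.sum_univ_two]
  nlinarith [norm_nonneg (circ 1 b)]

lemma norm_circ (a b : ℝ) : ‖circ a b‖ = |a| := by
  rw [circ_smul, norm_smul, norm_circ_one, Real.norm_eq_abs, mul_one]

lemma circ_per (a b : ℝ) : circ a (b + 2 * π) = circ a b := by
  simp [circ]

lemma circ_add_pi (a b : ℝ) : circ a (b + Real.pi) = -circ a b := by
  ext i; fin_cases i <;> simp [circ, WithLp.equiv_symm_apply, Real.cos_add, Real.sin_add]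

lemma hasDerivAt_circ_rho (a b : ℝ) : HasDerivAt (fun s => circ s b) (circ 1 b) a := by
  have : (fun s => circ s b) = fun s => s • circ 1 b := by
    funext s; rw [circ_smul]
  rw [this]
  simpa using (hasDerivAt_id a).smul_const (circ 1 b)

lemma hasDerivAt_circ_theta (a b : ℝ) :
    HasDerivAt (fun t => circ a t) (a • circ 1 (b + Real.pi/2)) b := by
  have h1 : HasDerivAt (fun t => (a * Real.cos t) • ee 0) ((a * -Real.sin b) • ee 0) b :=
    (((Real.hasDerivAt_cos b).const_mul a)).smul_const (ee 0)
  have h2 : HasDerivAt (fun t => (a * Real.sin t) • ee 1) ((a * Real.cos b) • ee 1) b :=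
    (((Real.hasDerivAt_sin b).const_mul a)).smul_const (ee 1)
  have := h1.fun_add h2
  have heq : (fun t => (a * Real.cos t) • ee 0 + (a * Real.sin t) • ee 1) = fun t => circ a t := by
    funext t; rw [circ_eq]
  rw [heq] at this
  refine this.congr_deriv (Eq.symm ?_)
  rw [circ_eq, smul_add, smul_smul, smul_smul, Real.cos_add_pi_div_two, Real.sin_add_pi_div_two]
  ring_nf

lemma bilin_trace (B : E2 →L[ℝ] E2 →L[ℝ] ℝ) (b : ℝ) :
    B (circ 1 b) (circ 1 b) + B (circ 1 (b + Real.pi/2)) (circ 1 (b + Real.pi/2))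
      = B (ee 0) (ee 0) + B (ee 1) (ee 1) := by
  have hc := Real.sin_sq_add_cos_sq b
  rw [circ_eq, circ_eq, Real.cos_add_pi_div_two, Real.sin_add_pi_div_two]
  simp only [map_add, ContinuousLinearMap.map_smul, _root_.map_smul,
    ContinuousLinearMap.add_apply, ContinuousLinearMap.smul_apply, smul_eq_mul, one_mul]
  linear_combination ((B (ee 0)) (ee 0) + (B (ee 1)) (ee 1)) * hc

lemma lin_norm_sq (L : E2 →L[ℝ] ℝ) (b : ℝ) :
    (L (circ 1 b))^2 + (L (circ 1 (b + Real.pi/2)))^2 = (L (ee 0))^2 + (L (ee 1))^2 := by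
  have hc := Real.sin_sq_add_cos_sq b
  rw [circ_eq, circ_eq, Real.cos_add_pi_div_two, Real.sin_add_pi_div_two]
  simp only [map_add, ContinuousLinearMap.map_smul, _root_.map_smul, smul_eq_mul, one_mul]
  linear_combination (L (ee 0)^2 + L (ee 1)^2) * hc

open scoped RealInnerProductSpace in
lemma opnorm_sq (L : E2 →L[ℝ] ℝ) : ‖L‖^2 = (L (ee 0))^2 + (L (ee 1))^2 := by
  set y := (InnerProductSpace.toDual ℝ E2).symm L with hy
  have hLy : ∀ v : E2, L v = ⟪y, v⟫ := fun v =>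
    (InnerProductSpace.toDual_symm_apply (x := v) (y := L)).symm
  have hnorm : ‖L‖ = ‖y‖ := ((InnerProductSpace.toDual ℝ E2).symm.norm_map L).symm
  have h0 : L (ee 0) = y 0 := by rw [hLy]; simp [EuclideanSpace.inner_single_right]
  have h1 : L (ee 1) = y 1 := by rw [hLy]; simp [EuclideanSpace.inner_single_right]
  rw [hnorm, h0, h1, EuclideanSpace.norm_eq, Real.sq_sqrt (by positivity)]
  simp [Fin.sum_univ_two, sq_abs]

/-! #### Polar coordinates -/

def m2 : E2 ≃ᵐ ℝ × ℝ :=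
  (MeasurableEquiv.toLp 2 (Fin 2 → ℝ)).symm.trans (MeasurableEquiv.finTwoArrow)

lemma m2_mp : MeasurePreserving m2 volume volume :=
  (volume_preserving_finTwoArrow ℝ).comp (EuclideanSpace.volume_preserving_symm_measurableEquiv_toLp (Fin 2))

lemma m2_symm_eq (a b : ℝ) : m2.symm (a, b) = (WithLp.equiv 2 (Fin 2 → ℝ)).symm ![a, b] := by
  have : m2 ((WithLp.equiv 2 (Fin 2 → ℝ)).symm ![a, b]) = (a, b) := by
    simp [m2, MeasurableEquiv.finTwoArrow]
  rw [← this, MeasurableEquiv.symm_apply_apply]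

lemma polar_ball (r : ℝ) (g : E2 → ℝ) :
    ∫ x in ball (0:E2) r, g x
      = ∫ p in Ioo (0:ℝ) r ×ˢ Ioo (-π) π, p.1 * g (circ p.1 p.2) := by
  have h1 : ∫ x in ball (0:E2) r, g x = ∫ x, (ball (0:E2) r).indicator g x :=
    (integral_indicator measurableSet_ball).symm
  have h2 : ∫ x, (ball (0:E2) r).indicator g x
      = ∫ q : ℝ × ℝ, (ball (0:E2) r).indicator g (m2.symm q) :=
    ((m2_mp.symm m2).integral_comp (m2.symm.measurableEmbedding) _).symm
  have h3 : (∫ p in polarCoord.target,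
      p.1 • (ball (0:E2) r).indicator g (m2.symm (polarCoord.symm p)))
      = ∫ q : ℝ × ℝ, (ball (0:E2) r).indicator g (m2.symm q) :=
    integral_comp_polarCoord_symm (fun q => (ball (0:E2) r).indicator g (m2.symm q))
  rw [h1, h2, ← h3]
  have h4 : ∀ p ∈ polarCoord.target,
      p.1 • (ball (0:E2) r).indicator g (m2.symm (polarCoord.symm p))
      = ({q : ℝ × ℝ | q.1 < r}).indicator (fun p => p.1 * g (circ p.1 p.2)) p := by
    rintro ⟨a, b⟩ hp
    simp only [polarCoord_target, mem_prod, mem_Ioi, mem_Ioo] at hp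
    have hc : m2.symm (polarCoord.symm (a, b)) = circ a b := by
      rw [polarCoord_symm_apply]; exact m2_symm_eq _ _
    rw [hc]
    by_cases hlt : a < r
    · have hmem : circ a b ∈ ball (0:E2) r := by
        rw [mem_ball_zero_iff, norm_circ, abs_of_pos hp.1]; exact hlt
      rw [indicator_of_mem hmem, indicator_of_mem (by simpa using hlt)]
      simp [smul_eq_mul]
    · have hmem : circ a b ∉ ball (0:E2) r := by
        rw [mem_ball_zero_iff, norm_circ, abs_of_pos hp.1]; exact hlt
      rw [indicator_of_notMem hmem, indicator_of_notMem (by simpa using hlt)]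
      simp
  rw [setIntegral_congr_fun (polarCoord.open_target.measurableSet) h4,
    setIntegral_indicator (by exact measurableSet_lt measurable_fst measurable_const)]
  have hset : polarCoord.target ∩ {q : ℝ × ℝ | q.1 < r} = Ioo (0:ℝ) r ×ˢ Ioo (-π) π := by
    rw [polarCoord_target]
    ext p
    simp only [mem_inter_iff, mem_prod, mem_Ioi, mem_Ioo, mem_setOf_eq]
    tauto
  rw [hset]

/-! #### Basic calculus facts -/

variable {R : ℝ} {u h₁ h₂ : E2 → ℝ} {x : E2}

lemma hasFDerivAt_u (hu : ContDiffOn ℝ 2 u (ball 0 R)) (hx : x ∈ ball (0:E2) R) :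
    HasFDerivAt u (fderiv ℝ u x) x :=
  ((hu.differentiableOn (by norm_num)).differentiableAt (isOpen_ball.mem_nhds hx)).hasFDerivAt

lemma hasFDerivAt_h (hh : ContDiffOn ℝ 1 h₁ (ball 0 R)) (hx : x ∈ ball (0:E2) R) :
    HasFDerivAt h₁ (fderiv ℝ h₁ x) x :=
  ((hh.differentiableOn (by norm_num)).differentiableAt (isOpen_ball.mem_nhds hx)).hasFDerivAt

lemma contDiffOn_fderiv_u (hu : ContDiffOn ℝ 2 u (ball 0 R)) :
    ContDiffOn ℝ 1 (fderiv ℝ u) (ball 0 R) :=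
  hu.fderiv_of_isOpen isOpen_ball (by norm_num)

lemma hasFDerivAt_du (hu : ContDiffOn ℝ 2 u (ball 0 R)) (hx : x ∈ ball (0:E2) R) :
    HasFDerivAt (fderiv ℝ u) (fderiv ℝ (fderiv ℝ u) x) x :=
  (((contDiffOn_fderiv_u hu).differentiableOn (by norm_num)).differentiableAt
      (isOpen_ball.mem_nhds hx)).hasFDerivAt

lemma d2u_symm (hu : ContDiffOn ℝ 2 u (ball 0 R)) (hx : x ∈ ball (0:E2) R) (v w : E2) :
    fderiv ℝ (fderiv ℝ u) x v w = fderiv ℝ (fderiv ℝ u) x w v := by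
  have hev : ∀ᶠ y in nhds x, HasFDerivAt u (fderiv ℝ u y) y := by
    filter_upwards [isOpen_ball.mem_nhds hx] with y hy
    exact hasFDerivAt_u hu hy
  exact second_derivative_symmetric_of_eventually hev (hasFDerivAt_du hu hx) v w

lemma lap_eq (hu : ContDiffOn ℝ 2 u (ball 0 R)) (hx : x ∈ ball (0:E2) R) :
    lap u x = fderiv ℝ (fderiv ℝ u) x (ee 0) (ee 0)
    + fderiv ℝ (fderiv ℝ u) x (ee 1) (ee 1) := by
  have key : ∀ v : E2, fderiv ℝ (fun y => fderiv ℝ u y v) x v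
      = fderiv ℝ (fderiv ℝ u) x v v := by
    intro v
    have h : HasFDerivAt (fun y => fderiv ℝ u y v)
        ((ContinuousLinearMap.apply ℝ ℝ v).comp (fderiv ℝ (fderiv ℝ u) x)) x :=
      (ContinuousLinearMap.apply ℝ ℝ v).hasFDerivAt.comp x (hasFDerivAt_du hu hx)
    rw [h.fderiv]
    rfl
  rw [lap, Fin.sum_univ_two, key, key]

/-! #### The functions entering the polar-coordinates computation -/

def om (t : ℝ) : E2 := circ 1 t
def ta (t : ℝ) : E2 := circ 1 (t + Real.pi/2)

lemma hasDerivAt_om (b : ℝ) : HasDerivAt om (ta b) b := by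
  have := hasDerivAt_circ_theta 1 b
  exact this.congr_deriv (one_smul _ _)

lemma hasDerivAt_ta (b : ℝ) : HasDerivAt ta (-(om b)) b := by
  have h1 : HasDerivAt (fun t : ℝ => t + Real.pi/2) 1 b := (hasDerivAt_id b).add_const _
  have h2 := (hasDerivAt_circ_theta 1 (b + Real.pi/2)).scomp b h1
  have : circ 1 (b + Real.pi/2 + Real.pi/2) = -(om b) := by
    rw [show b + Real.pi/2 + Real.pi/2 = b + Real.pi by ring, circ_add_pi]; rfl
  exact h2.congr_deriv (by simp only [one_smul, this])

def cc (p : ℝ × ℝ) : E2 := circ p.1 p.2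
def vR (u : E2 → ℝ) (p : ℝ × ℝ) : ℝ := fderiv ℝ u (cc p) (om p.2)
def vT (u : E2 → ℝ) (p : ℝ × ℝ) : ℝ := p.1 * fderiv ℝ u (cc p) (ta p.2)
def ff (u h₁ h₂ : E2 → ℝ) (p : ℝ × ℝ) : ℝ :=
  h₁ (cc p) * Real.exp (u (cc p)) + h₂ (cc p) * Real.exp (-(u (cc p)))
def PP (u h₁ h₂ : E2 → ℝ) (p : ℝ × ℝ) : ℝ :=
  p.1^2/2 * (vR u p)^2 - (vT u p)^2/2 + p.1^2 * ff u h₁ h₂ p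
def QQ (u : E2 → ℝ) (p : ℝ × ℝ) : ℝ := vR u p * vT u p
def DQ (u : E2 → ℝ) (p : ℝ × ℝ) : ℝ :=
  (p.1 * fderiv ℝ (fderiv ℝ u) (cc p) (ta p.2) (om p.2) + fderiv ℝ u (cc p) (ta p.2)) * vT u p
  + vR u p * (p.1^2 * fderiv ℝ (fderiv ℝ u) (cc p) (ta p.2) (ta p.2)
      - p.1 * fderiv ℝ u (cc p) (om p.2))
def AA (u h₁ h₂ : E2 → ℝ) (p : ℝ × ℝ) : ℝ :=
  p.1 * (fderiv ℝ h₁ (cc p) (cc p) * Real.exp (u (cc p))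
    + fderiv ℝ h₂ (cc p) (cc p) * Real.exp (-(u (cc p))) + 2 * ff u h₁ h₂ p)

/-! #### The two pointwise derivative identities -/

lemma claim_theta (hu : ContDiffOn ℝ 2 u (ball 0 R))
    {ρ : ℝ} (hρ : |ρ| < R) (θ : ℝ) :
    HasDerivAt (fun t => QQ u (ρ, t)) (DQ u (ρ, θ)) θ := by
  set x := circ ρ θ with hxdef
  have hx : x ∈ ball (0:E2) R := by
    rw [mem_ball_zero_iff, norm_circ]; exact hρ
  have h_c : HasDerivAt (fun t => circ ρ t) (ρ • ta θ) θ := hasDerivAt_circ_theta ρ θ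
  have h_du : HasDerivAt (fun t => fderiv ℝ u (circ ρ t))
      (ρ • (fderiv ℝ (fderiv ℝ u) x (ta θ))) θ := by
    have := (hasFDerivAt_du hu hx).comp_hasDerivAt θ h_c
    exact this.congr_deriv (by simp)
  have h_vR : HasDerivAt (fun t => fderiv ℝ u (circ ρ t) (om t))
      ((ρ • (fderiv ℝ (fderiv ℝ u) x (ta θ))) (om θ) + fderiv ℝ u x (ta θ)) θ := by
    simpa using h_du.clm_apply (hasDerivAt_om θ)
  have h_vT : HasDerivAt (fun t => ρ * fderiv ℝ u (circ ρ t) (ta t))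
      (ρ * ((ρ • (fderiv ℝ (fderiv ℝ u) x (ta θ))) (ta θ) + fderiv ℝ u x (-(om θ)))) θ :=
    (h_du.clm_apply (hasDerivAt_ta θ)).const_mul ρ
  have hmul := h_vR.fun_mul h_vT
  have heq : (fun t => fderiv ℝ u (circ ρ t) (om t) * (ρ * fderiv ℝ u (circ ρ t) (ta t)))
      = fun t => QQ u (ρ, t) := by
    funext t; simp [QQ, vR, vT, cc]
  rw [heq] at hmul
  convert! hmul using 1
  simp only [DQ, vR, vT, cc, ContinuousLinearMap.smul_apply, smul_eq_mul, map_neg]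
  ring

lemma claim_rho (hu : ContDiffOn ℝ 2 u (ball 0 R))
    (hh₁ : ContDiffOn ℝ 1 h₁ (ball 0 R)) (hh₂ : ContDiffOn ℝ 1 h₂ (ball 0 R))
    (heq : ∀ x ∈ ball (0:E2) R,
      lap u x + h₁ x * Real.exp (u x) - h₂ x * Real.exp (-(u x)) = 0)
    {ρ : ℝ} (hρ : |ρ| < R) (θ : ℝ) :
    HasDerivAt (fun s => PP u h₁ h₂ (s, θ)) (AA u h₁ h₂ (ρ, θ) - DQ u (ρ, θ)) ρ := by
  set x := circ ρ θ with hxdef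
  have hx : x ∈ ball (0:E2) R := by rw [mem_ball_zero_iff, norm_circ]; exact hρ
  have h_c : HasDerivAt (fun s => circ s θ) (om θ) ρ := hasDerivAt_circ_rho ρ θ
  have h_u : HasDerivAt (fun s => u (circ s θ)) (fderiv ℝ u x (om θ)) ρ :=
    (hasFDerivAt_u hu hx).comp_hasDerivAt ρ h_c
  have h_du : HasDerivAt (fun s => fderiv ℝ u (circ s θ))
      (fderiv ℝ (fderiv ℝ u) x (om θ)) ρ :=
    (hasFDerivAt_du hu hx).comp_hasDerivAt ρ h_c
  have h_vR : HasDerivAt (fun s => fderiv ℝ u (circ s θ) (om θ))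
      (fderiv ℝ (fderiv ℝ u) x (om θ) (om θ)) ρ := by
    simpa using h_du.clm_apply (hasDerivAt_const ρ (om θ))
  have h_vTpart : HasDerivAt (fun s => fderiv ℝ u (circ s θ) (ta θ))
      (fderiv ℝ (fderiv ℝ u) x (om θ) (ta θ)) ρ := by
    simpa using h_du.clm_apply (hasDerivAt_const ρ (ta θ))
  have h_h₁ : HasDerivAt (fun s => h₁ (circ s θ)) (fderiv ℝ h₁ x (om θ)) ρ :=
    (hasFDerivAt_h hh₁ hx).comp_hasDerivAt ρ h_c
  have h_h₂ : HasDerivAt (fun s => h₂ (circ s θ)) (fderiv ℝ h₂ x (om θ)) ρ :=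
    (hasFDerivAt_h hh₂ hx).comp_hasDerivAt ρ h_c
  have h_e1 : HasDerivAt (fun s => Real.exp (u (circ s θ)))
      (Real.exp (u x) * fderiv ℝ u x (om θ)) ρ := by
    simpa [mul_comm] using h_u.exp
  have h_e2 : HasDerivAt (fun s => Real.exp (-(u (circ s θ))))
      (Real.exp (-(u x)) * (-(fderiv ℝ u x (om θ)))) ρ := by
    simpa [mul_comm] using h_u.neg.exp
  have hT1 : HasDerivAt (fun s => s^2/2 * (fderiv ℝ u (circ s θ) (om θ))^2)
      (ρ * (fderiv ℝ u x (om θ))^2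
        + ρ^2/2 * (2 * fderiv ℝ u x (om θ) * fderiv ℝ (fderiv ℝ u) x (om θ) (om θ))) ρ := by
    have hs : HasDerivAt (fun s : ℝ => s^2/2) (ρ) ρ := by
      simpa using ((hasDerivAt_pow 2 ρ).div_const 2)
    have hsq : HasDerivAt (fun s => (fderiv ℝ u (circ s θ) (om θ))^2)
        (2 * fderiv ℝ u x (om θ) * fderiv ℝ (fderiv ℝ u) x (om θ) (om θ)) ρ := by
      convert! (h_vR.fun_mul h_vR) using 1
      · funext s; ring
      · show _ = _ * (fderiv ℝ u (circ ρ θ)) (om θ) + _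
        rw [← hxdef]; ring
    simpa using hs.fun_mul hsq
  have hT2 : HasDerivAt (fun s => (s * fderiv ℝ u (circ s θ) (ta θ))^2/2)
      ((ρ * fderiv ℝ u x (ta θ))
        * (fderiv ℝ u x (ta θ) + ρ * fderiv ℝ (fderiv ℝ u) x (om θ) (ta θ))) ρ := by
    have hin : HasDerivAt (fun s => s * fderiv ℝ u (circ s θ) (ta θ))
        (fderiv ℝ u x (ta θ) + ρ * fderiv ℝ (fderiv ℝ u) x (om θ) (ta θ)) ρ := by
      simpa using (hasDerivAt_id ρ).fun_mul h_vTpart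
    have := (hin.fun_mul hin).div_const 2
    convert! this using 1
    · funext; ring_nf
    · ring
  have hf : HasDerivAt (fun s => ff u h₁ h₂ (s, θ))
      (fderiv ℝ h₁ x (om θ) * Real.exp (u x)
        + h₁ x * (Real.exp (u x) * fderiv ℝ u x (om θ))
        + (fderiv ℝ h₂ x (om θ) * Real.exp (-(u x))
          + h₂ x * (Real.exp (-(u x)) * (-(fderiv ℝ u x (om θ)))))) ρ := by
    have := (h_h₁.fun_mul h_e1).fun_add (h_h₂.fun_mul h_e2)
    convert! this using 2 <;> simp [ff, cc] <;> ring
  have hT3 : HasDerivAt (fun s => s^2 * ff u h₁ h₂ (s, θ))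
      (2 * ρ * ff u h₁ h₂ (ρ, θ) + ρ^2 *
        (fderiv ℝ h₁ x (om θ) * Real.exp (u x)
        + h₁ x * (Real.exp (u x) * fderiv ℝ u x (om θ))
        + (fderiv ℝ h₂ x (om θ) * Real.exp (-(u x))
          + h₂ x * (Real.exp (-(u x)) * (-(fderiv ℝ u x (om θ))))))) ρ := by
    simpa using (hasDerivAt_pow 2 ρ).fun_mul hf
  have hPP : HasDerivAt (fun s => PP u h₁ h₂ (s, θ)) _ ρ := (hT1.sub hT2).add hT3
  convert! hPP using 1
  have hsymm := d2u_symm hu hx (om θ) (ta θ)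
  have htrace := bilin_trace (fderiv ℝ (fderiv ℝ u) x) θ
  have hxx₁ : fderiv ℝ h₁ x x = ρ * fderiv ℝ h₁ x (om θ) := by
    rw [hxdef, circ_smul]
    simp [om]
  have hxx₂ : fderiv ℝ h₂ x x = ρ * fderiv ℝ h₂ x (om θ) := by
    rw [hxdef, circ_smul]
    simp [om]
  simp only [AA, DQ, PP, vR, vT, ff, cc, ← hxdef]
  rw [hxx₁, hxx₂]
  have hBB : fderiv ℝ (fderiv ℝ u) x (om θ) (om θ) + fderiv ℝ (fderiv ℝ u) x (ta θ) (ta θ)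
      = -(h₁ x * Real.exp (u x)) + h₂ x * Real.exp (-(u x)) := by
    have h' : fderiv ℝ (fderiv ℝ u) x (om θ) (om θ) + fderiv ℝ (fderiv ℝ u) x (ta θ) (ta θ)
        = lap u x := by
      rw [lap_eq hu hx]; exact htrace
    rw [h']; linarith [heq x hx]
  linear_combination (-(ρ^2) * fderiv ℝ u x (om θ)) * hBB
    + (ρ * (ρ * fderiv ℝ u x (ta θ))) * hsymm

/-! #### Continuity of the various polar-coordinate functions -/

def Uset (R : ℝ) : Set (ℝ × ℝ) := {p | |p.1| < R}

lemma continuous_circ2 : Continuous (fun p : ℝ × ℝ => circ p.1 p.2) := by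
  simp only [circ_eq]
  fun_prop

lemma continuous_cc : Continuous cc := continuous_circ2

lemma continuous_om : Continuous om := by
  have : om = fun t => circ (1:ℝ) t := rfl
  rw [this]
  exact continuous_circ2.comp (continuous_const.prodMk continuous_id)

lemma continuous_ta : Continuous ta := by
  have : ta = fun t => circ (1:ℝ) (t + Real.pi/2) := rfl
  rw [this]
  exact continuous_circ2.comp (continuous_const.prodMk (continuous_id.add continuous_const))

lemma mapsTo_cc : MapsTo cc (Uset R) (ball (0:E2) R) := by
  intro p hp
  rw [mem_ball_zero_iff, cc, norm_circ]
  exact hp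

lemma contOn_comp {X : Type*} [TopologicalSpace X] {g : E2 → X}
    (hg : ContinuousOn g (ball (0:E2) R)) : ContinuousOn (fun p => g (cc p)) (Uset R) :=
  hg.comp continuous_cc.continuousOn mapsTo_cc

lemma continuousOn_vR (hu : ContDiffOn ℝ 2 u (ball 0 R)) : ContinuousOn (vR u) (Uset R) :=
  (contOn_comp (contDiffOn_fderiv_u hu).continuousOn).clm_apply
    (continuous_om.comp continuous_snd).continuousOn

lemma continuousOn_vT (hu : ContDiffOn ℝ 2 u (ball 0 R)) : ContinuousOn (vT u) (Uset R) :=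
  continuousOn_fst.mul ((contOn_comp (contDiffOn_fderiv_u hu).continuousOn).clm_apply
    (continuous_ta.comp continuous_snd).continuousOn)

lemma continuousOn_ff (hu : ContDiffOn ℝ 2 u (ball 0 R))
    (hh₁ : ContDiffOn ℝ 1 h₁ (ball 0 R)) (hh₂ : ContDiffOn ℝ 1 h₂ (ball 0 R)) :
    ContinuousOn (ff u h₁ h₂) (Uset R) := by
  have hus : ContinuousOn (fun p => u (cc p)) (Uset R) := contOn_comp hu.continuousOn
  exact ((contOn_comp hh₁.continuousOn).mul (Real.continuous_exp.comp_continuousOn hus)).add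
    ((contOn_comp hh₂.continuousOn).mul (Real.continuous_exp.comp_continuousOn hus.neg))

lemma continuousOn_PP (hu : ContDiffOn ℝ 2 u (ball 0 R))
    (hh₁ : ContDiffOn ℝ 1 h₁ (ball 0 R)) (hh₂ : ContDiffOn ℝ 1 h₂ (ball 0 R)) :
    ContinuousOn (PP u h₁ h₂) (Uset R) := by
  have h1 := continuousOn_vR hu
  have h2 := continuousOn_vT hu
  have h3 := continuousOn_ff hu hh₁ hh₂
  unfold PP
  fun_prop

lemma continuousOn_d2u_comp (hu : ContDiffOn ℝ 2 u (ball 0 R)) :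
    ContinuousOn (fun p => fderiv ℝ (fderiv ℝ u) (cc p)) (Uset R) :=
  contOn_comp ((contDiffOn_fderiv_u hu).continuousOn_fderiv_of_isOpen isOpen_ball (le_refl 1))

lemma continuousOn_DQ (hu : ContDiffOn ℝ 2 u (ball 0 R)) : ContinuousOn (DQ u) (Uset R) := by
  have h1 := continuousOn_vR hu
  have h2 := continuousOn_vT hu
  have hom : ContinuousOn (fun p : ℝ × ℝ => om p.2) (Uset R) :=
    (continuous_om.comp continuous_snd).continuousOn
  have hta : ContinuousOn (fun p : ℝ × ℝ => ta p.2) (Uset R) :=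
    (continuous_ta.comp continuous_snd).continuousOn
  have h3 : ContinuousOn (fun p => fderiv ℝ (fderiv ℝ u) (cc p) (ta p.2) (om p.2)) (Uset R) :=
    ((continuousOn_d2u_comp hu).clm_apply hta).clm_apply hom
  have h4 : ContinuousOn (fun p => fderiv ℝ (fderiv ℝ u) (cc p) (ta p.2) (ta p.2)) (Uset R) :=
    ((continuousOn_d2u_comp hu).clm_apply hta).clm_apply hta
  have h5 : ContinuousOn (fun p => fderiv ℝ u (cc p) (ta p.2)) (Uset R) :=
    (contOn_comp (contDiffOn_fderiv_u hu).continuousOn).clm_apply hta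
  have h6 : ContinuousOn (fun p => fderiv ℝ u (cc p) (om p.2)) (Uset R) :=
    (contOn_comp (contDiffOn_fderiv_u hu).continuousOn).clm_apply hom
  unfold DQ
  fun_prop

lemma continuousOn_AA (hu : ContDiffOn ℝ 2 u (ball 0 R))
    (hh₁ : ContDiffOn ℝ 1 h₁ (ball 0 R)) (hh₂ : ContDiffOn ℝ 1 h₂ (ball 0 R)) :
    ContinuousOn (AA u h₁ h₂) (Uset R) := by
  have hus : ContinuousOn (fun p => u (cc p)) (Uset R) := contOn_comp hu.continuousOn
  have h1 : ContinuousOn (fun p => fderiv ℝ h₁ (cc p) (cc p)) (Uset R) :=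
    (contOn_comp (hh₁.continuousOn_fderiv_of_isOpen isOpen_ball (le_refl 1))).clm_apply
      continuous_cc.continuousOn
  have h2 : ContinuousOn (fun p => fderiv ℝ h₂ (cc p) (cc p)) (Uset R) :=
    (contOn_comp (hh₂.continuousOn_fderiv_of_isOpen isOpen_ball (le_refl 1))).clm_apply
      continuous_cc.continuousOn
  have h3 := continuousOn_ff hu hh₁ hh₂
  have he1 : ContinuousOn (fun p => Real.exp (u (cc p))) (Uset R) :=
    Real.continuous_exp.comp_continuousOn hus
  have he2 : ContinuousOn (fun p => Real.exp (-(u (cc p)))) (Uset R) :=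
    Real.continuous_exp.comp_continuousOn hus.neg
  unfold AA
  fun_prop

end PohoAux

/-- formula (3.6): Pohozaev-type identity for the sinh-Gordon equation.
Boundary integrals over `∂B_r` are computed via arc-length parametrization
`θ ↦ (r cos θ, r sin θ)`, so that `∫_{∂B_r} g dσ = r ∫_0^{2π} g(r cos θ, r sin θ) dθ`, and
the outward unit normal at `(r cos θ, r sin θ)` is `(cos θ, sin θ)`. -/
theorem pohozaev_identity (R : ℝ) (hR : 0 < R) (u h₁ h₂ : E2 → ℝ)
    (hu : ContDiffOn ℝ 2 u (ball 0 R))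
    (hh₁ : ContDiffOn ℝ 1 h₁ (ball 0 R)) (hh₂ : ContDiffOn ℝ 1 h₂ (ball 0 R))
    (heq : ∀ x ∈ ball (0:E2) R,
      lap u x + h₁ x * Real.exp (u x) - h₂ x * Real.exp (-(u x)) = 0)
    (r : ℝ) (hr : 0 < r) (hrR : r < R) :
    (∫ x in ball (0:E2) r, (fderiv ℝ h₁ x x) * Real.exp (u x)) +
      (∫ x in ball (0:E2) r, (fderiv ℝ h₂ x x) * Real.exp (-(u x))) +
      2 * (∫ x in ball (0:E2) r, (h₁ x * Real.exp (u x) + h₂ x * Real.exp (-(u x)))) =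
    r * (r * ∫ θ in (0:ℝ)..(2 * Real.pi),
        (h₁ (circ r θ) * Real.exp (u (circ r θ)) +
          h₂ (circ r θ) * Real.exp (-(u (circ r θ))))) +
      r * (r * ∫ θ in (0:ℝ)..(2 * Real.pi),
        ((fderiv ℝ u (circ r θ) (circ 1 θ))^2 -
          (1/2) * ‖fderiv ℝ u (circ r θ)‖^2)) := by
  classical
  have hπ : (0:ℝ) < Real.pi := Real.pi_pos
  have hrR' : |r| < R := by rw [abs_of_pos hr]; exact hrR
  -- the combined integrand
  set F : E2 → ℝ := fun x => fderiv ℝ h₁ x x * Real.exp (u x)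
      + fderiv ℝ h₂ x x * Real.exp (-(u x))
      + 2 * (h₁ x * Real.exp (u x) + h₂ x * Real.exp (-(u x))) with hFdef
  set S : Set (ℝ × ℝ) := Ioo (0:ℝ) r ×ˢ Ioo (-Real.pi) Real.pi with hSdef
  -- integrability of things on S
  have hUsub : Icc (0:ℝ) r ×ˢ Icc (-Real.pi) Real.pi ⊆ PohoAux.Uset R := by
    rintro ⟨a, b⟩ ⟨ha, _⟩
    simp only [PohoAux.Uset, mem_setOf_eq]
    have : |a| ≤ r := abs_le.2 ⟨by linarith [ha.1], ha.2⟩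
    linarith
  have hSIcc : S ⊆ Icc (0:ℝ) r ×ˢ Icc (-Real.pi) Real.pi :=
    prod_mono Ioo_subset_Icc_self Ioo_subset_Icc_self
  have hScomp : IsCompact (Icc (0:ℝ) r ×ˢ Icc (-Real.pi) Real.pi) := isCompact_Icc.prod isCompact_Icc
  have intS : ∀ {G : ℝ × ℝ → ℝ}, ContinuousOn G (PohoAux.Uset R) → IntegrableOn G S := by
    intro G hG
    exact ((hG.mono hUsub).integrableOn_compact hScomp).mono_set hSIcc
  have hAAc := PohoAux.continuousOn_AA hu hh₁ hh₂
  have hDQc := PohoAux.continuousOn_DQ hu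
  have hAAint : IntegrableOn (PohoAux.AA u h₁ h₂) S := intS hAAc
  have hDQint : IntegrableOn (PohoAux.DQ u) S := intS hDQc
  have hGint : IntegrableOn (fun p => PohoAux.AA u h₁ h₂ p - PohoAux.DQ u p) S :=
    hAAint.sub hDQint
  -- continuity / integrability of pieces on the ball
  have hsubc : closedBall (0:E2) r ⊆ ball 0 R := closedBall_subset_ball hrR
  have hball_int : ∀ {g : E2 → ℝ}, ContinuousOn g (ball (0:E2) R) →
      IntegrableOn g (ball (0:E2) r) := by
    intro g hg
    exact ((hg.mono hsubc).integrableOn_compact (isCompact_closedBall _ _)).mono_set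
      ball_subset_closedBall
  have hcont_u : ContinuousOn u (ball (0:E2) R) := hu.continuousOn
  have hcont_e1 : ContinuousOn (fun x => Real.exp (u x)) (ball (0:E2) R) :=
    Real.continuous_exp.comp_continuousOn hcont_u
  have hcont_e2 : ContinuousOn (fun x => Real.exp (-(u x))) (ball (0:E2) R) :=
    Real.continuous_exp.comp_continuousOn hcont_u.neg
  have hcont_f1 : ContinuousOn (fun x => fderiv ℝ h₁ x x * Real.exp (u x)) (ball (0:E2) R) :=
    ((hh₁.continuousOn_fderiv_of_isOpen isOpen_ball (le_refl 1)).clm_apply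
      continuousOn_id).mul hcont_e1
  have hcont_f2 : ContinuousOn (fun x => fderiv ℝ h₂ x x * Real.exp (-(u x)))
      (ball (0:E2) R) :=
    ((hh₂.continuousOn_fderiv_of_isOpen isOpen_ball (le_refl 1)).clm_apply
      continuousOn_id).mul hcont_e2
  have hcont_f3 : ContinuousOn (fun x => h₁ x * Real.exp (u x) + h₂ x * Real.exp (-(u x)))
      (ball (0:E2) R) :=
    (hh₁.continuousOn.mul hcont_e1).add (hh₂.continuousOn.mul hcont_e2)
  have hi1 := hball_int hcont_f1
  have hi2 := hball_int hcont_f2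
  have hi3 := hball_int hcont_f3
  -- Step 1 : LHS = ∫ F over the ball
  have step1 : (∫ x in ball (0:E2) r, (fderiv ℝ h₁ x x) * Real.exp (u x)) +
      (∫ x in ball (0:E2) r, (fderiv ℝ h₂ x x) * Real.exp (-(u x))) +
      2 * (∫ x in ball (0:E2) r, (h₁ x * Real.exp (u x) + h₂ x * Real.exp (-(u x)))) =
      ∫ x in ball (0:E2) r, F x := by
    have h12 := integral_add hi1 hi2
    have h123 := integral_add (hi1.add hi2) (hi3.const_mul 2)
    simp only [Pi.add_apply] at h123
    rw [hFdef]
    rw [h123, h12, MeasureTheory.integral_const_mul]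
  -- Step 2 : polar coordinates
  have step2 : ∫ x in ball (0:E2) r, F x = ∫ p in S, PohoAux.AA u h₁ h₂ p := by
    rw [PohoAux.polar_ball r F]
    rfl
  -- Step 3 : split
  have step3 : ∫ p in S, PohoAux.AA u h₁ h₂ p
      = (∫ p in S, (PohoAux.AA u h₁ h₂ p - PohoAux.DQ u p)) + ∫ p in S, PohoAux.DQ u p := by
    rw [integral_sub hAAint hDQint]; ring
  -- slice continuity helpers
  have slice_theta : ∀ {G : ℝ × ℝ → ℝ}, ContinuousOn G (PohoAux.Uset R) → ∀ {ρ : ℝ}, |ρ| < R →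
      Continuous (fun t => G (ρ, t)) := by
    intro G hG ρ hρ
    rw [← continuousOn_univ]
    apply hG.comp ((continuous_const.prodMk continuous_id).continuousOn)
    intro t _
    exact hρ
  have slice_rho : ∀ {G : ℝ × ℝ → ℝ}, ContinuousOn G (PohoAux.Uset R) → ∀ θ : ℝ,
      ContinuousOn (fun s => G (s, θ)) (Icc 0 r) := by
    intro G hG θ
    apply hG.comp ((continuous_id.prodMk continuous_const).continuousOn)
    intro s hs
    show |s| < R
    have : |s| ≤ r := abs_le.2 ⟨by linarith [hs.1], hs.2⟩
    linarith
  -- Step 4 : the DQ integral vanishes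
  have step4 : ∫ p in S, PohoAux.DQ u p = 0 := by
    rw [hSdef, Measure.volume_eq_prod, setIntegral_prod _ (by rwa [← Measure.volume_eq_prod])]
    have inner0 : ∀ ρ ∈ Ioo (0:ℝ) r, (∫ θ in Ioo (-Real.pi) Real.pi, PohoAux.DQ u (ρ, θ)) = 0 := by
      intro ρ hρ
      have hρR : |ρ| < R := by
        rw [abs_of_pos hρ.1]; linarith [hρ.2]
      have hder : ∀ t ∈ uIcc (-Real.pi) Real.pi, HasDerivAt (fun t => PohoAux.QQ u (ρ, t))
          (PohoAux.DQ u (ρ, t)) t := fun t _ => PohoAux.claim_theta hu hρR t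
      have hint : IntervalIntegrable (fun t => PohoAux.DQ u (ρ, t)) volume (-Real.pi) Real.pi :=
        (slice_theta hDQc hρR).intervalIntegrable _ _
      have hftc := intervalIntegral.integral_eq_sub_of_hasDerivAt hder hint
      have hper : PohoAux.QQ u (ρ, Real.pi) = PohoAux.QQ u (ρ, -Real.pi) := by
        have hQper : PohoAux.QQ u (ρ, -Real.pi + 2*Real.pi) = PohoAux.QQ u (ρ, -Real.pi) := by
          simp only [PohoAux.QQ, PohoAux.vR, PohoAux.vT, PohoAux.cc, PohoAux.om, PohoAux.ta]
          rw [show (-Real.pi + 2*Real.pi) + Real.pi/2 = (-Real.pi + Real.pi/2) + 2*Real.pi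
              by ring, PohoAux.circ_per, PohoAux.circ_per, PohoAux.circ_per]
        have harg : -Real.pi + 2*Real.pi = Real.pi := by ring
        rw [harg] at hQper
        exact hQper
      rw [← MeasureTheory.integral_Ioc_eq_integral_Ioo,
        ← intervalIntegral.integral_of_le (by linarith : -Real.pi ≤ Real.pi), hftc, hper, sub_self]
    rw [setIntegral_congr_fun measurableSet_Ioo inner0]
    simp
  -- Step 5 : FTC in the radial variable
  have inner_PP : ∀ θ : ℝ,
      (∫ s in Ioo (0:ℝ) r, (PohoAux.AA u h₁ h₂ (s, θ) - PohoAux.DQ u (s, θ)))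
        = PohoAux.PP u h₁ h₂ (r, θ) := by
    intro θ
    have hcont : ContinuousOn (fun s => PohoAux.PP u h₁ h₂ (s, θ)) (Icc 0 r) :=
      slice_rho (PohoAux.continuousOn_PP hu hh₁ hh₂) θ
    have hder : ∀ s ∈ Ioo (0:ℝ) r, HasDerivWithinAt (fun s => PohoAux.PP u h₁ h₂ (s, θ))
        ((fun s => PohoAux.AA u h₁ h₂ (s, θ) - PohoAux.DQ u (s, θ)) s) (Ioi s) s := by
      intro s hs
      have hsR : |s| < R := by rw [abs_of_pos hs.1]; linarith [hs.2]
      exact (PohoAux.claim_rho hu hh₁ hh₂ heq hsR θ).hasDerivWithinAt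
    have hint : IntervalIntegrable (fun s => PohoAux.AA u h₁ h₂ (s, θ) - PohoAux.DQ u (s, θ))
        volume 0 r := by
      apply ContinuousOn.intervalIntegrable
      rw [uIcc_of_le hr.le]
      exact (slice_rho hAAc θ).sub (slice_rho hDQc θ)
    have hftc := intervalIntegral.integral_eq_sub_of_hasDeriv_right_of_le hr.le hcont hder hint
    have h0 : PohoAux.PP u h₁ h₂ (0, θ) = 0 := by
      simp [PohoAux.PP, PohoAux.vT]
    rw [← MeasureTheory.integral_Ioc_eq_integral_Ioo,
      ← intervalIntegral.integral_of_le hr.le, hftc, h0, sub_zero]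
  have step5 : (∫ p in S, (PohoAux.AA u h₁ h₂ p - PohoAux.DQ u p))
      = ∫ θ in Ioo (-Real.pi) Real.pi, PohoAux.PP u h₁ h₂ (r, θ) := by
    have hswap : Integrable
        (Function.uncurry fun s θ => PohoAux.AA u h₁ h₂ (s, θ) - PohoAux.DQ u (s, θ))
        ((volume.restrict (Ioo (0:ℝ) r)).prod (volume.restrict (Ioo (-Real.pi) Real.pi))) := by
      rw [Measure.prod_restrict]
      exact hGint
    rw [hSdef, Measure.volume_eq_prod, setIntegral_prod _ (by rwa [← Measure.volume_eq_prod])]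
    calc (∫ s in Ioo (0:ℝ) r, ∫ θ in Ioo (-Real.pi) Real.pi,
            (PohoAux.AA u h₁ h₂ (s, θ) - PohoAux.DQ u (s, θ)))
        = ∫ θ in Ioo (-Real.pi) Real.pi, ∫ s in Ioo (0:ℝ) r,
            (PohoAux.AA u h₁ h₂ (s, θ) - PohoAux.DQ u (s, θ)) :=
          MeasureTheory.integral_integral_swap hswap
      _ = ∫ θ in Ioo (-Real.pi) Real.pi, PohoAux.PP u h₁ h₂ (r, θ) := by
          apply setIntegral_congr_fun measurableSet_Ioo
          intro θ _
          exact inner_PP θ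
  -- Step 6 : from (-Real.pi, Real.pi) to (0, 2π) and identification with the RHS
  have hper : Function.Periodic (fun θ => PohoAux.PP u h₁ h₂ (r, θ)) (2*Real.pi) := by
    intro θ
    simp only [PohoAux.PP, PohoAux.vR, PohoAux.vT, PohoAux.ff, PohoAux.cc, PohoAux.om,
      PohoAux.ta]
    rw [show (θ + 2*Real.pi) + Real.pi/2 = (θ + Real.pi/2) + 2*Real.pi by ring, PohoAux.circ_per, PohoAux.circ_per,
      PohoAux.circ_per]
  have step6 : (∫ θ in Ioo (-Real.pi) Real.pi, PohoAux.PP u h₁ h₂ (r, θ))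
      = ∫ θ in (0:ℝ)..(2*Real.pi), PohoAux.PP u h₁ h₂ (r, θ) := by
    rw [← MeasureTheory.integral_Ioc_eq_integral_Ioo,
      ← intervalIntegral.integral_of_le (by linarith : -Real.pi ≤ Real.pi)]
    have := hper.intervalIntegral_add_eq (-Real.pi) 0
    rw [show -Real.pi + 2*Real.pi = Real.pi by ring] at this
    rw [this, zero_add]
  -- identification of the RHS
  have hRHS : r * (r * ∫ θ in (0:ℝ)..(2 * Real.pi),
        (h₁ (circ r θ) * Real.exp (u (circ r θ)) +
          h₂ (circ r θ) * Real.exp (-(u (circ r θ))))) +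
      r * (r * ∫ θ in (0:ℝ)..(2 * Real.pi),
        ((fderiv ℝ u (circ r θ) (circ 1 θ))^2 -
          (1/2) * ‖fderiv ℝ u (circ r θ)‖^2))
      = ∫ θ in (0:ℝ)..(2*Real.pi), PohoAux.PP u h₁ h₂ (r, θ) := by
    have hptwise : ∀ θ : ℝ, PohoAux.PP u h₁ h₂ (r, θ)
        = r^2 * (h₁ (circ r θ) * Real.exp (u (circ r θ)) +
            h₂ (circ r θ) * Real.exp (-(u (circ r θ))))
          + r^2 * ((fderiv ℝ u (circ r θ) (circ 1 θ))^2 -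
            (1/2) * ‖fderiv ℝ u (circ r θ)‖^2) := by
      intro θ
      have hx : circ r θ ∈ ball (0:E2) R := by
        rw [mem_ball_zero_iff, PohoAux.norm_circ]; exact hrR'
      have hnorm : ‖fderiv ℝ u (circ r θ)‖^2
          = (fderiv ℝ u (circ r θ) (PohoAux.om θ))^2
            + (fderiv ℝ u (circ r θ) (PohoAux.ta θ))^2 := by
        rw [PohoAux.opnorm_sq (fderiv ℝ u (circ r θ))]
        exact (PohoAux.lin_norm_sq (fderiv ℝ u (circ r θ)) θ).symm
      simp only [PohoAux.PP, PohoAux.vR, PohoAux.vT, PohoAux.ff, PohoAux.cc]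
      rw [hnorm]
      show r^2/2 * (fderiv ℝ u (circ r θ) (PohoAux.om θ))^2 - _ + _ = _
      simp only [PohoAux.om]
      ring
    have hc1 : Continuous (fun θ => h₁ (circ r θ) * Real.exp (u (circ r θ)) +
        h₂ (circ r θ) * Real.exp (-(u (circ r θ)))) := by
      have := slice_theta (PohoAux.continuousOn_ff hu hh₁ hh₂) hrR'
      exact this
    have hc2 : Continuous (fun θ => (fderiv ℝ u (circ r θ) (circ 1 θ))^2 -
        (1/2) * ‖fderiv ℝ u (circ r θ)‖^2) := by
      have hvr := slice_theta (PohoAux.continuousOn_vR hu) hrR'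
      have hvt := slice_theta (PohoAux.continuousOn_vT hu) hrR'
      have h2 : Continuous (fun θ => ‖fderiv ℝ u (circ r θ)‖^2) := by
        have : ∀ θ, ‖fderiv ℝ u (circ r θ)‖^2
            = (PohoAux.vR u (r, θ))^2 + (fderiv ℝ u (circ r θ) (PohoAux.ta θ))^2 := by
          intro θ
          rw [PohoAux.opnorm_sq (fderiv ℝ u (circ r θ))]
          exact (PohoAux.lin_norm_sq (fderiv ℝ u (circ r θ)) θ).symm
        simp only [this]
        have hvt' : Continuous (fun θ => fderiv ℝ u (circ r θ) (PohoAux.ta θ)) := by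
          have hrne : r ≠ 0 := ne_of_gt hr
          have : ∀ θ, fderiv ℝ u (circ r θ) (PohoAux.ta θ) = (PohoAux.vT u (r, θ)) / r := by
            intro θ
            simp only [PohoAux.vT, PohoAux.cc]
            field_simp
          simp only [this]
          exact hvt.div_const r
        fun_prop
      have hvr' : Continuous (fun θ => fderiv ℝ u (circ r θ) (circ 1 θ)) := hvr
      fun_prop
    calc r * (r * ∫ θ in (0:ℝ)..(2 * Real.pi),
            (h₁ (circ r θ) * Real.exp (u (circ r θ)) +
              h₂ (circ r θ) * Real.exp (-(u (circ r θ))))) +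
          r * (r * ∫ θ in (0:ℝ)..(2 * Real.pi),
            ((fderiv ℝ u (circ r θ) (circ 1 θ))^2 -
              (1/2) * ‖fderiv ℝ u (circ r θ)‖^2))
        = r^2 * (∫ θ in (0:ℝ)..(2 * Real.pi),
            (h₁ (circ r θ) * Real.exp (u (circ r θ)) +
              h₂ (circ r θ) * Real.exp (-(u (circ r θ))))) +
          r^2 * (∫ θ in (0:ℝ)..(2 * Real.pi),
            ((fderiv ℝ u (circ r θ) (circ 1 θ))^2 -
              (1/2) * ‖fderiv ℝ u (circ r θ)‖^2)) := by ring
      _ = (∫ θ in (0:ℝ)..(2 * Real.pi),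
            r^2 * (h₁ (circ r θ) * Real.exp (u (circ r θ)) +
              h₂ (circ r θ) * Real.exp (-(u (circ r θ))))) +
          ∫ θ in (0:ℝ)..(2 * Real.pi),
            r^2 * ((fderiv ℝ u (circ r θ) (circ 1 θ))^2 -
              (1/2) * ‖fderiv ℝ u (circ r θ)‖^2) := by
            rw [intervalIntegral.integral_const_mul, intervalIntegral.integral_const_mul]
      _ = ∫ θ in (0:ℝ)..(2 * Real.pi),
            (r^2 * (h₁ (circ r θ) * Real.exp (u (circ r θ)) +
              h₂ (circ r θ) * Real.exp (-(u (circ r θ))))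
            + r^2 * ((fderiv ℝ u (circ r θ) (circ 1 θ))^2 -
              (1/2) * ‖fderiv ℝ u (circ r θ)‖^2)) :=
          (intervalIntegral.integral_add ((continuous_const.mul hc1).intervalIntegrable _ _)
            ((continuous_const.mul hc2).intervalIntegrable _ _)).symm
      _ = ∫ θ in (0:ℝ)..(2*Real.pi), PohoAux.PP u h₁ h₂ (r, θ) := by
          apply intervalIntegral.integral_congr
          intro θ _
          exact (hptwise θ).symm
  rw [step1, step2, step3, step4, step5, step6, add_zero, hRHS]

end
end
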